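/- Let W be a graphon such that spr(W) ≥ spr(U) for every graphon U, and let f, g ∈ L²[0,1] be unit eigenfunctions of W for the eigenvalues μ(W) and ν(W), respectively. Then: (i) for a.e. (x,y) ∈ [0,1]², W(x,y) = 1 if f(x)f(y) > g(x)g(y) and W(x,y) = 0 if f(x)f(y) < g(x)g(y); and (ii) f(x)f(y) − g(x)g(y) ≠ 0 for a.e. (x,y) ∈ [0,1]². -/

import Mathlib

open MeasureTheory

/-- Lebesgue measure restricted to the unit square `[0,1]²`. -/
noncomputable def unitSq : Measure (ℝ × ℝ) :=
  volume.restrict (Set.Icc (0 : ℝ) 1 ×ˢ Set.Icc (0 : ℝ) 1)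

/-- Lebesgue measure restricted to the unit interval `[0,1]`. -/
noncomputable def unitInt : Measure ℝ := volume.restrict (Set.Icc (0 : ℝ) 1)

/-- A graphon: a measurable function with values in `[0,1]` which is symmetric
almost everywhere on `[0,1]²`. -/
def IsGraphon (W : ℝ → ℝ → ℝ) : Prop :=
  Measurable (Function.uncurry W) ∧ (∀ x y, W x y ∈ Set.Icc (0 : ℝ) 1) ∧
    (∀ᵐ p : ℝ × ℝ ∂unitSq, W p.1 p.2 = W p.2 p.1)

/-- A unit function of `L²[0,1]`: measurable with `∫₀¹ f² = 1`. -/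
def IsUnitL2 (f : ℝ → ℝ) : Prop :=
  Measurable f ∧ (∫ x in Set.Icc (0 : ℝ) 1, (f x) ^ 2) = 1

/-- The quadratic form `∫₀¹∫₀¹ W(x,y) f(x) f(y) dx dy`. -/
noncomputable def quadForm (W : ℝ → ℝ → ℝ) (f : ℝ → ℝ) : ℝ :=
  ∫ x in Set.Icc (0 : ℝ) 1, ∫ y in Set.Icc (0 : ℝ) 1, W x y * f x * f y

/-- `μ(W)`, the maximum eigenvalue of the kernel operator associated to `W`. -/
noncomputable def graphonMu (W : ℝ → ℝ → ℝ) : ℝ :=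
  sSup {r : ℝ | ∃ f : ℝ → ℝ, IsUnitL2 f ∧ r = quadForm W f}

/-- `ν(W)`, the minimum eigenvalue of the kernel operator associated to `W`. -/
noncomputable def graphonNu (W : ℝ → ℝ → ℝ) : ℝ :=
  sInf {r : ℝ | ∃ f : ℝ → ℝ, IsUnitL2 f ∧ r = quadForm W f}

/-- The spread `spr(W) = μ(W) − ν(W)` of a graphon. -/
noncomputable def graphonSpr (W : ℝ → ℝ → ℝ) : ℝ := graphonMu W - graphonNu W

/-- `f` is a `lam`-eigenfunction of the kernel operator of `W`. -/
def IsEigenfunction (W : ℝ → ℝ → ℝ) (lam : ℝ) (f : ℝ → ℝ) : Prop :=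
  ∀ᵐ x ∂unitInt, (∫ y in Set.Icc (0 : ℝ) 1, W x y * f y) = lam * f x


instance : IsProbabilityMeasure unitInt := by
  constructor
  rw [unitInt, Measure.restrict_apply MeasurableSet.univ, Set.univ_inter, Real.volume_Icc]
  norm_num

lemma unitSq_eq : unitSq = unitInt.prod unitInt := by
  rw [unitInt, unitSq, Measure.prod_restrict, ← Measure.volume_eq_prod]

lemma integral_unitInt_eq (F : ℝ → ℝ) : (∫ x in Set.Icc (0:ℝ) 1, F x) = ∫ x, F x ∂unitInt := rfl


lemma sq_integrable_of_unit {f : ℝ → ℝ} (hf : IsUnitL2 f) :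
    Integrable (fun x => f x ^ 2) unitInt := by
  by_contra h
  have := integral_undef (μ := unitInt) (f := fun x => f x ^ 2) h
  rw [← integral_unitInt_eq] at this
  rw [hf.2] at this; norm_num at this

lemma integrable_of_sq {f : ℝ → ℝ} (hm : Measurable f)
    (h2 : Integrable (fun x => f x ^ 2) unitInt) : Integrable f unitInt := by
  have hb : Integrable (fun x => (f x ^ 2 + 1) / 2) unitInt :=
    ((h2.add (integrable_const 1)).div_const 2)
  refine hb.mono' hm.aestronglyMeasurable ?_
  refine Filter.Eventually.of_forall (fun x => ?_)
  rw [Real.norm_eq_abs]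
  nlinarith [sq_nonneg (|f x| - 1), sq_abs (f x)]

lemma mul_integrable {f g : ℝ → ℝ} (hfm : Measurable f) (hgm : Measurable g)
    (hf2 : Integrable (fun x => f x ^ 2) unitInt)
    (hg2 : Integrable (fun x => g x ^ 2) unitInt) :
    Integrable (fun x => f x * g x) unitInt := by
  have hb : Integrable (fun x => (f x ^ 2 + g x ^ 2) / 2) unitInt := (hf2.add hg2).div_const 2
  refine hb.mono' (hfm.mul hgm).aestronglyMeasurable ?_
  refine Filter.Eventually.of_forall (fun x => ?_)
  rw [Real.norm_eq_abs, abs_mul]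
  nlinarith [sq_nonneg (|f x| - |g x|), sq_abs (f x), sq_abs (g x)]

lemma intQ {V : ℝ → ℝ → ℝ} {φ ψ : ℝ → ℝ} (hVm : Measurable (Function.uncurry V))
    (hVb : ∀ x y, |V x y| ≤ 1) (hφm : Measurable φ) (hψm : Measurable ψ)
    (hφ : Integrable φ unitInt) (hψ : Integrable ψ unitInt) :
    Integrable (fun p : ℝ × ℝ => V p.1 p.2 * φ p.1 * ψ p.2) (unitInt.prod unitInt) := by
  have hb : Integrable (fun p : ℝ × ℝ => |φ p.1| * |ψ p.2|) (unitInt.prod unitInt) :=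
    hφ.abs.mul_prod hψ.abs
  refine hb.mono' ?_ (Filter.Eventually.of_forall (fun p => ?_))
  · exact ((hVm.mul (hφm.comp measurable_fst)).mul
      (hψm.comp measurable_snd)).aestronglyMeasurable
  · rw [Real.norm_eq_abs, abs_mul, abs_mul]
    have := hVb p.1 p.2
    have h1 := abs_nonneg (φ p.1); have h2 := abs_nonneg (ψ p.2)
    have h0 := abs_nonneg (V p.1 p.2)
    nlinarith [mul_le_mul_of_nonneg_right (mul_le_mul_of_nonneg_right this h1) h2]

noncomputable def Q (V : ℝ → ℝ → ℝ) (φ ψ : ℝ → ℝ) : ℝ :=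
  ∫ p : ℝ × ℝ, V p.1 p.2 * φ p.1 * ψ p.2 ∂(unitInt.prod unitInt)


lemma Q_eq_iterated {V : ℝ → ℝ → ℝ} {φ ψ : ℝ → ℝ}
    (h : Integrable (fun p : ℝ × ℝ => V p.1 p.2 * φ p.1 * ψ p.2) (unitInt.prod unitInt)) :
    Q V φ ψ = ∫ x, (∫ y, V x y * φ x * ψ y ∂unitInt) ∂unitInt :=
  integral_prod _ h

lemma quadForm_eq_Q {V : ℝ → ℝ → ℝ} {φ : ℝ → ℝ}
    (h : Integrable (fun p : ℝ × ℝ => V p.1 p.2 * φ p.1 * φ p.2) (unitInt.prod unitInt)) :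
    quadForm V φ = Q V φ φ := by
  rw [Q_eq_iterated h, quadForm]
  rfl





lemma graphon_abs_le {V : ℝ → ℝ → ℝ} (hV : IsGraphon V) : ∀ x y, |V x y| ≤ 1 := by
  intro x y
  have h := hV.2.1 x y
  rw [abs_le]; exact ⟨by linarith [h.1], h.2⟩

lemma unit_f0 : IsUnitL2 (fun _ : ℝ => (1:ℝ)) := by
  refine ⟨measurable_const, ?_⟩
  simp [integral_unitInt_eq (fun _ => (1:ℝ)^2)]

lemma unit_abs_integral_le {φ : ℝ → ℝ} (hφ : IsUnitL2 φ) : (∫ x, |φ x| ∂unitInt) ≤ 1 := by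
  have h2 := sq_integrable_of_unit hφ
  have hint : (∫ x, φ x ^ 2 ∂unitInt) = 1 := by rw [← integral_unitInt_eq]; exact hφ.2
  have hb : Integrable (fun x => (φ x ^ 2 + 1) / 2) unitInt :=
    (h2.add (integrable_const 1)).div_const 2
  calc (∫ x, |φ x| ∂unitInt) ≤ ∫ x, (φ x ^ 2 + 1) / 2 ∂unitInt := by
        refine integral_mono ((integrable_of_sq hφ.1 h2).abs) hb (fun x => ?_)
        nlinarith [sq_nonneg (|φ x| - 1), sq_abs (φ x)]
    _ = 1 := by
        rw [integral_div, integral_add h2 (integrable_const 1), hint]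
        simp

lemma abs_quadForm_le {V : ℝ → ℝ → ℝ} (hV : IsGraphon V) {φ : ℝ → ℝ} (hφ : IsUnitL2 φ) :
    |quadForm V φ| ≤ 1 := by
  have hφi := integrable_of_sq hφ.1 (sq_integrable_of_unit hφ)
  have hi := intQ hV.1 (graphon_abs_le hV) hφ.1 hφ.1 hφi hφi
  rw [quadForm_eq_Q hi, Q]
  have hbd : Integrable (fun p : ℝ × ℝ => |φ p.1| * |φ p.2|) (unitInt.prod unitInt) :=
    hφi.abs.mul_prod hφi.abs
  calc |∫ p : ℝ × ℝ, V p.1 p.2 * φ p.1 * φ p.2 ∂(unitInt.prod unitInt)|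
      ≤ ∫ p : ℝ × ℝ, |V p.1 p.2 * φ p.1 * φ p.2| ∂(unitInt.prod unitInt) :=
      by
        rw [← Real.norm_eq_abs]
        exact (norm_integral_le_integral_norm _).trans (le_of_eq (by simp [Real.norm_eq_abs, abs_mul]))
    _ ≤ ∫ p : ℝ × ℝ, |φ p.1| * |φ p.2| ∂(unitInt.prod unitInt) := by
        refine integral_mono hi.abs hbd (fun p => ?_)
        rw [abs_mul, abs_mul]
        have := graphon_abs_le hV p.1 p.2
        nlinarith [abs_nonneg (φ p.1), abs_nonneg (φ p.2), abs_nonneg (V p.1 p.2),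
          mul_le_mul_of_nonneg_right (mul_le_mul_of_nonneg_right this (abs_nonneg (φ p.1)))
            (abs_nonneg (φ p.2))]
    _ = (∫ x, |φ x| ∂unitInt) * (∫ x, |φ x| ∂unitInt) := by
        rw [integral_prod_mul (f := fun x => |φ x|) (g := fun x => |φ x|)]
    _ ≤ 1 := by
        have := unit_abs_integral_le hφ
        have h0 : 0 ≤ ∫ x, |φ x| ∂unitInt := integral_nonneg (fun x => abs_nonneg _)
        nlinarith

lemma quadForm_le_mu {V : ℝ → ℝ → ℝ} (hV : IsGraphon V) {φ : ℝ → ℝ} (hφ : IsUnitL2 φ) :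
    quadForm V φ ≤ graphonMu V := by
  refine le_csSup ⟨1, ?_⟩ ⟨φ, hφ, rfl⟩
  rintro r ⟨u, hu, rfl⟩
  exact le_of_abs_le (abs_quadForm_le hV hu)

lemma nu_le_quadForm {V : ℝ → ℝ → ℝ} (hV : IsGraphon V) {φ : ℝ → ℝ} (hφ : IsUnitL2 φ) :
    graphonNu V ≤ quadForm V φ := by
  refine csInf_le ⟨-1, ?_⟩ ⟨φ, hφ, rfl⟩
  rintro r ⟨u, hu, rfl⟩
  exact neg_le_of_abs_le (abs_quadForm_le hV hu)

lemma spr_ge_pair {W : ℝ → ℝ → ℝ}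
    (hmax : ∀ U : ℝ → ℝ → ℝ, IsGraphon U → graphonSpr U ≤ graphonSpr W)
    {V : ℝ → ℝ → ℝ} (hV : IsGraphon V) {u v : ℝ → ℝ} (hu : IsUnitL2 u) (hv : IsUnitL2 v) :
    quadForm V u - quadForm V v ≤ graphonSpr W := by
  have h1 := quadForm_le_mu hV hu
  have h2 := nu_le_quadForm hV hv
  have := hmax V hV
  simp only [graphonSpr] at this ⊢
  linarith


lemma quadForm_eigen {W : ℝ → ℝ → ℝ} {f : ℝ → ℝ} {lam : ℝ} (hf : IsUnitL2 f)
    (hfe : IsEigenfunction W lam f) : quadForm W f = lam := by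
  have hstep : quadForm W f = ∫ x, f x * (∫ y, W x y * f y ∂unitInt) ∂unitInt := by
    rw [quadForm, integral_unitInt_eq]
    congr 1
    funext x
    rw [← integral_const_mul, ← integral_unitInt_eq]
    congr 1; funext y; ring
  rw [hstep]
  have hcong : (fun x => f x * (∫ y, W x y * f y ∂unitInt)) =ᵐ[unitInt]
      (fun x => lam * f x ^ 2) := by
    filter_upwards [hfe] with x hx
    have hx' : (∫ y, W x y * f y ∂unitInt) = lam * f x := hx
    rw [hx']; ring
  rw [integral_congr_ae hcong, integral_const_mul, ← integral_unitInt_eq, hf.2, mul_one]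

lemma isGraphon_one : IsGraphon (fun _ _ : ℝ => (1:ℝ)) := by
  refine ⟨measurable_const, fun x y => by norm_num, Filter.Eventually.of_forall (fun p => rfl)⟩

noncomputable def gzero : ℝ → ℝ := fun x => if x ≤ (1:ℝ)/2 then 1 else -1

lemma gzero_meas : Measurable gzero :=
  Measurable.ite (measurableSet_le measurable_id measurable_const) measurable_const
    measurable_const

lemma gzero_sq : ∀ x, gzero x ^ 2 = 1 := by
  intro x; rw [gzero]; by_cases h : x ≤ (1:ℝ)/2 <;> simp [h]

lemma unit_gzero : IsUnitL2 gzero := by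
  refine ⟨gzero_meas, ?_⟩
  have : (∫ x in Set.Icc (0:ℝ) 1, gzero x ^ 2) = ∫ x in Set.Icc (0:ℝ) 1, (1:ℝ) := by
    refine integral_congr_ae (Filter.Eventually.of_forall (fun x => gzero_sq x))
  rw [this, setIntegral_const, measureReal_def, Real.volume_Icc]
  norm_num

lemma integral_gzero : (∫ x, gzero x ∂unitInt) = 0 := by
  rw [← integral_unitInt_eq]
  have hsplit : Set.Icc (0:ℝ) 1 = Set.Icc (0:ℝ) (1/2) ∪ Set.Ioc (1/2 : ℝ) 1 :=
    (Set.Icc_union_Ioc_eq_Icc (by norm_num) (by norm_num)).symm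
  have hdisj : Disjoint (Set.Icc (0:ℝ) (1/2)) (Set.Ioc (1/2 : ℝ) 1) := by
    rw [Set.disjoint_left]
    rintro x ⟨_, h2⟩ ⟨h3, _⟩
    linarith
  have hint1 : IntegrableOn gzero (Set.Icc (0:ℝ) (1/2)) volume := by
    refine Integrable.mono' (g := fun _ => (1:ℝ)) ?_ gzero_meas.aestronglyMeasurable ?_
    · exact integrableOn_const (ne_of_lt (by rw [Real.volume_Icc]; exact ENNReal.ofReal_lt_top))
    · refine Filter.Eventually.of_forall (fun x => ?_)
      rw [Real.norm_eq_abs, gzero]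
      by_cases h : x ≤ (1:ℝ)/2
      · rw [if_pos (by linarith)]; norm_num
      · rw [if_neg (by intro hc; apply h; linarith)]; norm_num
  have hint2 : IntegrableOn gzero (Set.Ioc (1/2:ℝ) 1) volume := by
    refine Integrable.mono' (g := fun _ => (1:ℝ)) ?_ gzero_meas.aestronglyMeasurable ?_
    · exact integrableOn_const (ne_of_lt (by rw [Real.volume_Ioc]; exact ENNReal.ofReal_lt_top))
    · refine Filter.Eventually.of_forall (fun x => ?_)
      rw [Real.norm_eq_abs, gzero]
      by_cases h : x ≤ (1:ℝ)/2
      · rw [if_pos (by linarith)]; norm_num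
      · rw [if_neg (by intro hc; apply h; linarith)]; norm_num
  rw [hsplit, setIntegral_union hdisj measurableSet_Ioc hint1 hint2]
  have e1 : (∫ x in Set.Icc (0:ℝ) (1/2), gzero x) = ∫ x in Set.Icc (0:ℝ) (1/2), (1:ℝ) := by
    refine setIntegral_congr_fun measurableSet_Icc (fun x hx => ?_)
    rw [gzero, if_pos hx.2]
  have e2 : (∫ x in Set.Ioc (1/2:ℝ) 1, gzero x) = ∫ x in Set.Ioc (1/2:ℝ) 1, (-1:ℝ) := by
    refine setIntegral_congr_fun measurableSet_Ioc (fun x hx => ?_)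
    rw [gzero, if_neg (by linarith [hx.1])]
  rw [e1, e2, setIntegral_const, setIntegral_const, measureReal_def, measureReal_def, Real.volume_Icc, Real.volume_Ioc]
  norm_num

lemma one_le_spr {W : ℝ → ℝ → ℝ}
    (hmax : ∀ U : ℝ → ℝ → ℝ, IsGraphon U → graphonSpr U ≤ graphonSpr W) :
    1 ≤ graphonSpr W := by
  have hf0 := unit_f0
  have hg0 := unit_gzero
  have hg0i := integrable_of_sq hg0.1 (sq_integrable_of_unit hg0)
  have hf0i : Integrable (fun _ : ℝ => (1:ℝ)) unitInt := integrable_const 1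
  have habs : ∀ x y : ℝ, |(fun _ _ : ℝ => (1:ℝ)) x y| ≤ 1 := fun x y => by norm_num
  have q1 : quadForm (fun _ _ : ℝ => (1:ℝ)) (fun _ => (1:ℝ)) = 1 := by
    rw [quadForm_eq_Q (intQ measurable_const habs measurable_const measurable_const hf0i hf0i), Q]
    simp
  have q2 : quadForm (fun _ _ : ℝ => (1:ℝ)) gzero = 0 := by
    rw [quadForm_eq_Q (intQ measurable_const habs gzero_meas gzero_meas hg0i hg0i), Q]
    have : (fun p : ℝ × ℝ => (1:ℝ) * gzero p.1 * gzero p.2)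
        = fun p : ℝ × ℝ => gzero p.1 * gzero p.2 := by funext p; ring
    rw [this, integral_prod_mul (f := gzero) (g := gzero), integral_gzero]
    ring
  have := spr_ge_pair hmax isGraphon_one hf0 hg0
  rw [q1, q2] at this
  linarith

lemma integral_sq_expand {f g : ℝ → ℝ} (hf : IsUnitL2 f) (hg : IsUnitL2 g) (a b : ℝ) :
    (∫ x, (a * f x + b * g x) ^ 2 ∂unitInt)
      = a ^ 2 + 2 * (a * b) * (∫ x, f x * g x ∂unitInt) + b ^ 2 := by
  have hf2 := sq_integrable_of_unit hf
  have hg2 := sq_integrable_of_unit hg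
  have hfg := mul_integrable hf.1 hg.1 hf2 hg2
  have e : (fun x => (a * f x + b * g x) ^ 2)
      = fun x => a ^ 2 * f x ^ 2 + (2 * (a * b)) * (f x * g x) + b ^ 2 * g x ^ 2 := by
    funext x; ring
  have h1 : Integrable (fun x => a ^ 2 * f x ^ 2 + 2 * (a * b) * (f x * g x)) unitInt :=
    (hf2.const_mul _).add (hfg.const_mul _)
  have h2 : Integrable (fun x => b ^ 2 * g x ^ 2) unitInt := hg2.const_mul _
  have h3 : Integrable (fun x => a ^ 2 * f x ^ 2) unitInt := hf2.const_mul _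
  have h4 : Integrable (fun x => 2 * (a * b) * (f x * g x)) unitInt := hfg.const_mul _
  have hfu : (∫ x, f x ^ 2 ∂unitInt) = 1 := by
    rw [← integral_unitInt_eq (fun x => f x ^ 2)]; exact hf.2
  have hgu : (∫ x, g x ^ 2 ∂unitInt) = 1 := by
    rw [← integral_unitInt_eq (fun x => g x ^ 2)]; exact hg.2
  rw [e, integral_add h1 h2, integral_add h3 h4, integral_const_mul, integral_const_mul,
    integral_const_mul, hfu, hgu]
  ring

lemma unit_combo {f g : ℝ → ℝ} (hf : IsUnitL2 f) (hg : IsUnitL2 g)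
    (hρ : (∫ x, f x * g x ∂unitInt) = 0) {a b : ℝ} (hab : a ^ 2 + b ^ 2 = 1) :
    IsUnitL2 (fun x => a * f x + b * g x) := by
  refine ⟨(hf.1.const_mul a).add (hg.1.const_mul b), ?_⟩
  have := integral_sq_expand hf hg a b
  rw [hρ] at this
  rw [integral_unitInt_eq (fun x => (a * f x + b * g x) ^ 2), this]
  linarith

lemma Q_expand {V : ℝ → ℝ → ℝ} (hVm : Measurable (Function.uncurry V))
    (hVb : ∀ x y, |V x y| ≤ 1) {f g : ℝ → ℝ} (hfm : Measurable f) (hgm : Measurable g)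
    (hfi : Integrable f unitInt) (hgi : Integrable g unitInt) (a b : ℝ) :
    Q V (fun x => a * f x + b * g x) (fun x => a * f x + b * g x)
      = a ^ 2 * Q V f f + (a * b) * (Q V f g + Q V g f) + b ^ 2 * Q V g g := by
  have iff' := intQ hVm hVb hfm hfm hfi hfi
  have ifg := intQ hVm hVb hfm hgm hfi hgi
  have igf := intQ hVm hVb hgm hfm hgi hfi
  have igg := intQ hVm hVb hgm hgm hgi hgi
  have e : (fun p : ℝ × ℝ => V p.1 p.2 * (a * f p.1 + b * g p.1) * (a * f p.2 + b * g p.2))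
      = fun p : ℝ × ℝ => (a ^ 2) * (V p.1 p.2 * f p.1 * f p.2)
          + ((a * b) * (V p.1 p.2 * f p.1 * g p.2 + V p.1 p.2 * g p.1 * f p.2)
          + (b ^ 2) * (V p.1 p.2 * g p.1 * g p.2)) := by
    funext p; ring
  have h0 : Integrable (fun p : ℝ × ℝ => V p.1 p.2 * f p.1 * g p.2 + V p.1 p.2 * g p.1 * f p.2)
      (unitInt.prod unitInt) := ifg.add igf
  have h1 : Integrable (fun p : ℝ × ℝ => (a * b) * (V p.1 p.2 * f p.1 * g p.2
      + V p.1 p.2 * g p.1 * f p.2) + (b ^ 2) * (V p.1 p.2 * g p.1 * g p.2))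
      (unitInt.prod unitInt) := (h0.const_mul _).add (igg.const_mul _)
  have h2 : Integrable (fun p : ℝ × ℝ => (a ^ 2) * (V p.1 p.2 * f p.1 * f p.2))
      (unitInt.prod unitInt) := iff'.const_mul _
  have h3 : Integrable (fun p : ℝ × ℝ => (a * b) * (V p.1 p.2 * f p.1 * g p.2
      + V p.1 p.2 * g p.1 * f p.2)) (unitInt.prod unitInt) := h0.const_mul _
  have h4 : Integrable (fun p : ℝ × ℝ => (b ^ 2) * (V p.1 p.2 * g p.1 * g p.2))
      (unitInt.prod unitInt) := igg.const_mul _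
  rw [Q, e, integral_add h2 h1, integral_add h3 h4,
    integral_const_mul, integral_const_mul, integral_const_mul, integral_add ifg igf]
  rw [Q, Q, Q, Q]
  ring

lemma rho_zero {W : ℝ → ℝ → ℝ} (hW : IsGraphon W) {f g : ℝ → ℝ}
    (hf : IsUnitL2 f) (hg : IsUnitL2 g)
    (hfe : IsEigenfunction W (graphonMu W) f) (hge : IsEigenfunction W (graphonNu W) g)
    (hne : graphonMu W ≠ graphonNu W) : (∫ x, f x * g x ∂unitInt) = 0 := by
  have hfi := integrable_of_sq hf.1 (sq_integrable_of_unit hf)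
  have hgi := integrable_of_sq hg.1 (sq_integrable_of_unit hg)
  have hfg := intQ hW.1 (graphon_abs_le hW) hf.1 hg.1 hfi hgi
  set ρ := ∫ x, f x * g x ∂unitInt with hρdef
  -- Path 1
  have path1 : Q W f g = graphonNu W * ρ := by
    rw [Q_eq_iterated hfg]
    have e : ∀ x : ℝ, (∫ y, W x y * f x * g y ∂unitInt) = f x * ∫ y, W x y * g y ∂unitInt := by
      intro x
      rw [← integral_const_mul]
      congr 1; funext y; ring
    have : (fun x => ∫ y, W x y * f x * g y ∂unitInt) =ᵐ[unitInt]
        (fun x => graphonNu W * (f x * g x)) := by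
      filter_upwards [hge] with x hx
      have hx' : (∫ y, W x y * g y ∂unitInt) = graphonNu W * g x := hx
      rw [e x, hx']; ring
    rw [integral_congr_ae this, integral_const_mul]
  -- Path 2
  have hWm' : Measurable (Function.uncurry (fun x y : ℝ => W y x)) := by
    have : Function.uncurry (fun x y : ℝ => W y x)
        = (Function.uncurry W) ∘ Prod.swap := by funext p; rfl
    rw [this]; exact hW.1.comp measurable_swap
  have hb' : ∀ x y : ℝ, |(fun x y : ℝ => W y x) x y| ≤ 1 := fun x y => graphon_abs_le hW y x
  have hfg' := intQ (V := fun x y : ℝ => W y x) hWm' hb' hf.1 hg.1 hfi hgi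
  have hsymm : (fun p : ℝ × ℝ => W p.1 p.2 * f p.1 * g p.2) =ᵐ[unitInt.prod unitInt]
      (fun p : ℝ × ℝ => W p.2 p.1 * f p.1 * g p.2) := by
    have h := hW.2.2
    rw [unitSq_eq] at h
    filter_upwards [h] with p hp
    rw [hp]
  have path2 : Q W f g = graphonMu W * ρ := by
    have e1 : Q W f g = ∫ p : ℝ × ℝ, W p.2 p.1 * f p.1 * g p.2 ∂(unitInt.prod unitInt) :=
      integral_congr_ae hsymm
    rw [e1, integral_prod_symm _ hfg']
    have e : ∀ y : ℝ, (∫ x, W y x * f x * g y ∂unitInt) = g y * ∫ x, W y x * f x ∂unitInt := by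
      intro y
      rw [← integral_const_mul]
      congr 1; funext x; ring
    have : (fun y => ∫ x, W y x * f x * g y ∂unitInt) =ᵐ[unitInt]
        (fun y => graphonMu W * (f y * g y)) := by
      filter_upwards [hfe] with y hy
      have hy' : (∫ x, W y x * f x ∂unitInt) = graphonMu W * f y := hy
      rw [e y, hy']; ring
    rw [integral_congr_ae this, integral_const_mul]
  have : graphonNu W * ρ = graphonMu W * ρ := by rw [← path1, ← path2]
  rcases mul_eq_mul_right_iff.1 this with h | h
  · exact absurd h.symm hne
  · exact h

lemma sqrt_inv_sq {ε : ℝ} : ((Real.sqrt (1 + ε ^ 2))⁻¹) ^ 2 = (1 + ε ^ 2)⁻¹ := by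
  rw [← Real.sqrt_inv, Real.sq_sqrt (by positivity)]

lemma keyC {W : ℝ → ℝ → ℝ}
    (hmax : ∀ U : ℝ → ℝ → ℝ, IsGraphon U → graphonSpr U ≤ graphonSpr W)
    {V : ℝ → ℝ → ℝ} (hV : IsGraphon V) {f g : ℝ → ℝ} (hf : IsUnitL2 f) (hg : IsUnitL2 g)
    (hρ : (∫ x, f x * g x ∂unitInt) = 0)
    (hAB : Q V f f - Q V g g = graphonSpr W) : Q V f g + Q V g f = 0 := by
  have hspr := one_le_spr hmax
  have hfi := integrable_of_sq hf.1 (sq_integrable_of_unit hf)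
  have hgi := integrable_of_sq hg.1 (sq_integrable_of_unit hg)
  set S := Q V f g + Q V g f with hSdef
  have master : ∀ ε : ℝ, ε * S ≤ ε ^ 2 * graphonSpr W := by
    intro ε
    set c : ℝ := (Real.sqrt (1 + ε ^ 2))⁻¹ with hcdef
    have hc2 : c ^ 2 = (1 + ε ^ 2)⁻¹ := sqrt_inv_sq
    have hc2pos : (0:ℝ) < 1 + ε ^ 2 := by positivity
    have hu : IsUnitL2 (fun x => c * f x + (c * ε) * g x) := by
      refine unit_combo hf hg hρ ?_
      rw [show c ^ 2 + (c * ε) ^ 2 = c ^ 2 * (1 + ε ^ 2) from by ring, hc2]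
      field_simp
    have hv : IsUnitL2 (fun x => (-(c * ε)) * f x + c * g x) := by
      refine unit_combo hf hg hρ ?_
      rw [show (-(c * ε)) ^ 2 + c ^ 2 = c ^ 2 * (1 + ε ^ 2) from by ring, hc2]
      field_simp
    have hui : Integrable (fun x => c * f x + (c * ε) * g x) unitInt :=
      (hfi.const_mul _).add (hgi.const_mul _)
    have hvi : Integrable (fun x => (-(c * ε)) * f x + c * g x) unitInt :=
      (hfi.const_mul _).add (hgi.const_mul _)
    have hqu : quadForm V (fun x => c * f x + (c * ε) * g x)
        = c ^ 2 * Q V f f + (c * (c * ε)) * S + (c * ε) ^ 2 * Q V g g := by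
      rw [quadForm_eq_Q (intQ hV.1 (graphon_abs_le hV) hu.1 hu.1 hui hui),
        Q_expand hV.1 (graphon_abs_le hV) hf.1 hg.1 hfi hgi, hSdef]
    have hqv : quadForm V (fun x => (-(c * ε)) * f x + c * g x)
        = (c * ε) ^ 2 * Q V f f + (-(c * ε) * c) * S + c ^ 2 * Q V g g := by
      rw [quadForm_eq_Q (intQ hV.1 (graphon_abs_le hV) hv.1 hv.1 hvi hvi),
        Q_expand hV.1 (graphon_abs_le hV) hf.1 hg.1 hfi hgi, hSdef]
      ring_nf
    have hle := spr_ge_pair hmax hV hu hv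
    rw [hqu, hqv] at hle
    have hle2 : (c ^ 2 - (c*ε)^2) * (Q V f f - Q V g g) + 2 * (c^2*ε) * S
        ≤ graphonSpr W := by nlinarith [hle]
    rw [hAB] at hle2
    have hc2' : c ^ 2 * (1 + ε ^ 2) = 1 := by rw [hc2]; field_simp
    have hd : (0:ℝ) < c ^ 2 := by rw [hc2]; positivity
    have h5 : 2 * (c ^ 2 * ε) * S ≤ 2 * (c ^ 2 * ε ^ 2) * graphonSpr W := by
      nlinarith [hle2, hc2']
    nlinarith [h5, hd]
  have hσpos : (0:ℝ) < graphonSpr W := lt_of_lt_of_le one_pos hspr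
  have h1 := master (S / (2 * graphonSpr W))
  have e1 : S / (2 * graphonSpr W) * S = S ^ 2 / (2 * graphonSpr W) := by ring
  have e2 : (S / (2 * graphonSpr W)) ^ 2 * graphonSpr W = S ^ 2 / (4 * graphonSpr W) := by
    field_simp
    ring
  rw [e1, e2, div_le_div_iff₀ (by positivity) (by positivity)] at h1
  have hS2 : S ^ 2 ≤ 0 := by nlinarith [h1, hσpos]
  have := le_antisymm hS2 (sq_nonneg S)
  exact sq_eq_zero_iff.1 this

noncomputable def Upp (f g : ℝ → ℝ) : ℝ → ℝ → ℝ :=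
  fun x y => if 0 < f x * f y - g x * g y then 1 else 0

lemma isGraphon_Upp {f g : ℝ → ℝ} (hfm : Measurable f) (hgm : Measurable g) :
    IsGraphon (Upp f g) := by
  refine ⟨?_, ?_, ?_⟩
  · have hF : Measurable (fun p : ℝ × ℝ => f p.1 * f p.2 - g p.1 * g p.2) :=
      ((hfm.comp measurable_fst).mul (hfm.comp measurable_snd)).sub
        ((hgm.comp measurable_fst).mul (hgm.comp measurable_snd))
    exact Measurable.ite (measurableSet_lt measurable_const hF) measurable_const
      measurable_const
  · intro x y
    rw [Upp]
    by_cases h : 0 < f x * f y - g x * g y <;> simp [h]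
  · refine Filter.Eventually.of_forall (fun p => ?_)
    show (if 0 < f p.1 * f p.2 - g p.1 * g p.2 then (1:ℝ) else 0)
        = if 0 < f p.2 * f p.1 - g p.2 * g p.1 then 1 else 0
    rw [mul_comm (f p.2) (f p.1), mul_comm (g p.2) (g p.1)]

lemma chain {W : ℝ → ℝ → ℝ} {f g : ℝ → ℝ} (hW : IsGraphon W)
    (hmax : ∀ U : ℝ → ℝ → ℝ, IsGraphon U → graphonSpr U ≤ graphonSpr W)
    (hf : IsUnitL2 f) (hg : IsUnitL2 g)
    (hfe : IsEigenfunction W (graphonMu W) f) (hge : IsEigenfunction W (graphonNu W) g) :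
    (∀ᵐ p : ℝ × ℝ ∂(unitInt.prod unitInt),
      (Upp f g p.1 p.2 - W p.1 p.2) * (f p.1 * f p.2 - g p.1 * g p.2) = 0)
    ∧ Q (Upp f g) f f - Q (Upp f g) g g = graphonSpr W
    ∧ Q (Upp f g) f f = graphonMu (Upp f g)
    ∧ Q (Upp f g) g g = graphonNu (Upp f g) := by
  have hfi := integrable_of_sq hf.1 (sq_integrable_of_unit hf)
  have hgi := integrable_of_sq hg.1 (sq_integrable_of_unit hg)
  have hU := isGraphon_Upp hf.1 hg.1
  have iWff := intQ hW.1 (graphon_abs_le hW) hf.1 hf.1 hfi hfi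
  have iWgg := intQ hW.1 (graphon_abs_le hW) hg.1 hg.1 hgi hgi
  have iUff := intQ hU.1 (graphon_abs_le hU) hf.1 hf.1 hfi hfi
  have iUgg := intQ hU.1 (graphon_abs_le hU) hg.1 hg.1 hgi hgi
  have eqW : Q W f f - Q W g g = graphonSpr W := by
    rw [← quadForm_eq_Q iWff, ← quadForm_eq_Q iWgg, quadForm_eigen hf hfe,
      quadForm_eigen hg hge, graphonSpr]
  have hptwise : ∀ p : ℝ × ℝ,
      W p.1 p.2 * f p.1 * f p.2 - W p.1 p.2 * g p.1 * g p.2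
      ≤ Upp f g p.1 p.2 * f p.1 * f p.2 - Upp f g p.1 p.2 * g p.1 * g p.2 := by
    intro p
    have hb := hW.2.1 p.1 p.2
    rw [Upp]
    by_cases h : 0 < f p.1 * f p.2 - g p.1 * g p.2
    · rw [if_pos h]; nlinarith [hb.2]
    · rw [if_neg h]
      push_neg at h
      nlinarith [hb.1]
  have iU' : Integrable (fun p : ℝ × ℝ =>
      Upp f g p.1 p.2 * f p.1 * f p.2 - Upp f g p.1 p.2 * g p.1 * g p.2)
      (unitInt.prod unitInt) := iUff.sub iUgg
  have iW' : Integrable (fun p : ℝ × ℝ =>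
      W p.1 p.2 * f p.1 * f p.2 - W p.1 p.2 * g p.1 * g p.2)
      (unitInt.prod unitInt) := iWff.sub iWgg
  have sub1 : (∫ p : ℝ × ℝ, (Upp f g p.1 p.2 * f p.1 * f p.2
      - Upp f g p.1 p.2 * g p.1 * g p.2) ∂(unitInt.prod unitInt))
      = Q (Upp f g) f f - Q (Upp f g) g g := integral_sub iUff iUgg
  have sub2 : (∫ p : ℝ × ℝ, (W p.1 p.2 * f p.1 * f p.2
      - W p.1 p.2 * g p.1 * g p.2) ∂(unitInt.prod unitInt))
      = Q W f f - Q W g g := integral_sub iWff iWgg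
  have hmono : Q W f f - Q W g g ≤ Q (Upp f g) f f - Q (Upp f g) g g := by
    rw [← sub1, ← sub2]
    exact integral_mono iW' iU' (fun p => hptwise p)
  have hup : Q (Upp f g) f f - Q (Upp f g) g g ≤ graphonSpr W := by
    have h1 : quadForm (Upp f g) f ≤ graphonMu (Upp f g) := quadForm_le_mu hU hf
    have h2 : graphonNu (Upp f g) ≤ quadForm (Upp f g) g := nu_le_quadForm hU hg
    have h3 := hmax _ hU
    rw [quadForm_eq_Q iUff] at h1
    rw [quadForm_eq_Q iUgg] at h2
    rw [graphonSpr] at h3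
    linarith
  have hQeq : Q (Upp f g) f f - Q (Upp f g) g g = graphonSpr W :=
    le_antisymm hup (by linarith [hmono, eqW])
  have hMu : Q (Upp f g) f f = graphonMu (Upp f g) := by
    have h1 : Q (Upp f g) f f ≤ graphonMu (Upp f g) := by
      rw [← quadForm_eq_Q iUff]; exact quadForm_le_mu hU hf
    have h2 : graphonNu (Upp f g) ≤ Q (Upp f g) g g := by
      rw [← quadForm_eq_Q iUgg]; exact nu_le_quadForm hU hg
    have h3 := hmax _ hU
    rw [graphonSpr] at h3
    linarith [hQeq]
  have hNu : Q (Upp f g) g g = graphonNu (Upp f g) := by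
    have h1 : Q (Upp f g) f f ≤ graphonMu (Upp f g) := by
      rw [← quadForm_eq_Q iUff]; exact quadForm_le_mu hU hf
    have h2 : graphonNu (Upp f g) ≤ Q (Upp f g) g g := by
      rw [← quadForm_eq_Q iUgg]; exact nu_le_quadForm hU hg
    have h3 := hmax _ hU
    rw [graphonSpr] at h3
    linarith [hQeq]
  refine ⟨?_, hQeq, hMu, hNu⟩
  -- a.e. vanishing
  have hint : Integrable (fun p : ℝ × ℝ =>
      (Upp f g p.1 p.2 - W p.1 p.2) * (f p.1 * f p.2 - g p.1 * g p.2))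
      (unitInt.prod unitInt) := by
    have : (fun p : ℝ × ℝ =>
        (Upp f g p.1 p.2 - W p.1 p.2) * (f p.1 * f p.2 - g p.1 * g p.2))
        = fun p : ℝ × ℝ => (Upp f g p.1 p.2 * f p.1 * f p.2 - Upp f g p.1 p.2 * g p.1 * g p.2)
          - (W p.1 p.2 * f p.1 * f p.2 - W p.1 p.2 * g p.1 * g p.2) := by
      funext p; ring
    rw [this]
    exact (iUff.sub iUgg).sub (iWff.sub iWgg)
  have hzero : (∫ p : ℝ × ℝ,
      (Upp f g p.1 p.2 - W p.1 p.2) * (f p.1 * f p.2 - g p.1 * g p.2)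
      ∂(unitInt.prod unitInt)) = 0 := by
    have e0 : (fun p : ℝ × ℝ =>
        (Upp f g p.1 p.2 - W p.1 p.2) * (f p.1 * f p.2 - g p.1 * g p.2))
        = fun p : ℝ × ℝ => (Upp f g p.1 p.2 * f p.1 * f p.2 - Upp f g p.1 p.2 * g p.1 * g p.2)
          - (W p.1 p.2 * f p.1 * f p.2 - W p.1 p.2 * g p.1 * g p.2) := by
      funext p; ring
    rw [e0, integral_sub iU' iW', sub1, sub2, hQeq, eqW]
    ring
  have hnn : 0 ≤ᵐ[unitInt.prod unitInt] (fun p : ℝ × ℝ =>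
      (Upp f g p.1 p.2 - W p.1 p.2) * (f p.1 * f p.2 - g p.1 * g p.2)) := by
    refine Filter.Eventually.of_forall (fun p => ?_)
    have := hptwise p
    simp only [Pi.zero_apply]
    nlinarith [this]
  have := (integral_eq_zero_iff_of_nonneg_ae hnn hint).1 hzero
  filter_upwards [this] with p hp
  exact hp

lemma no_sign_kk {W : ℝ → ℝ → ℝ} {f g : ℝ → ℝ} (hW : IsGraphon W)
    (hmax : ∀ U : ℝ → ℝ → ℝ, IsGraphon U → graphonSpr U ≤ graphonSpr W)
    (hf : IsUnitL2 f) (hg : IsUnitL2 g)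
    (hfe : IsEigenfunction W (graphonMu W) f) (hge : IsEigenfunction W (graphonNu W) g)
    (σ : ℝ) (hσ : σ = 1 ∨ σ = -1) :
    ∀ᵐ p : ℝ × ℝ ∂(unitInt.prod unitInt),
      ¬(f p.1 * f p.2 - g p.1 * g p.2 = 0
        ∧ 0 < σ * (f p.1 * g p.2 + g p.1 * f p.2)) := by
  have hfi := integrable_of_sq hf.1 (sq_integrable_of_unit hf)
  have hgi := integrable_of_sq hg.1 (sq_integrable_of_unit hg)
  have hU := isGraphon_Upp hf.1 hg.1
  have hspr := one_le_spr hmax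
  have hne : graphonMu W ≠ graphonNu W := by
    intro h; rw [graphonSpr, h] at hspr; linarith
  have hρ := rho_zero hW hf hg hfe hge hne
  obtain ⟨_, hQeq, _, _⟩ := chain hW hmax hf hg hfe hge
  have hSUpp : Q (Upp f g) f g + Q (Upp f g) g f = 0 := keyC hmax hU hf hg hρ hQeq
  classical
  -- the perturbed kernel
  set cond : ℝ → ℝ → Prop := fun x y => f x * f y - g x * g y = 0
      ∧ 0 < σ * (f x * g y + g x * f y) with hconddef
  set Vp : ℝ → ℝ → ℝ := fun x y => if cond x y then 1 else Upp f g x y with hVpdef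
  set χ : ℝ → ℝ → ℝ := fun x y => if cond x y then 1 else 0 with hχdef
  have hDset : MeasurableSet {p : ℝ × ℝ | cond p.1 p.2} := by
    have h1 : MeasurableSet {p : ℝ × ℝ | f p.1 * f p.2 - g p.1 * g p.2 = 0} := by
      have hm : Measurable (fun p : ℝ × ℝ => f p.1 * f p.2 - g p.1 * g p.2) :=
        ((hf.1.comp measurable_fst).mul (hf.1.comp measurable_snd)).sub
          ((hg.1.comp measurable_fst).mul (hg.1.comp measurable_snd))
      exact hm (measurableSet_singleton 0)
    have h2 : MeasurableSet {p : ℝ × ℝ | 0 < σ * (f p.1 * g p.2 + g p.1 * f p.2)} := by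
      have hm : Measurable (fun p : ℝ × ℝ => σ * (f p.1 * g p.2 + g p.1 * f p.2)) :=
        (((hf.1.comp measurable_fst).mul (hg.1.comp measurable_snd)).add
          ((hg.1.comp measurable_fst).mul (hf.1.comp measurable_snd))).const_mul σ
      exact measurableSet_lt measurable_const hm
    exact h1.inter h2
  have hχm : Measurable (Function.uncurry χ) := by
    exact Measurable.ite hDset measurable_const measurable_const
  have hχb : ∀ x y, |χ x y| ≤ 1 := by
    intro x y
    show |if cond x y then (1:ℝ) else 0| ≤ 1
    by_cases h : cond x y
    · rw [if_pos h]; norm_num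
    · rw [if_neg h]; norm_num
  have hGr : IsGraphon Vp := by
    refine ⟨Measurable.ite hDset measurable_const hU.1, ?_, ?_⟩
    · intro x y
      rw [hVpdef]
      by_cases h : cond x y
      · simp only [if_pos h]; norm_num
      · simp only [if_neg h]; exact hU.2.1 x y
    · refine Filter.Eventually.of_forall (fun p => ?_)
      have hcsym : cond p.1 p.2 ↔ cond p.2 p.1 := by
        rw [hconddef]
        constructor <;> rintro ⟨h1, h2⟩ <;> refine ⟨by linear_combination h1, ?_⟩ <;>
          · have e : σ * (f p.2 * g p.1 + g p.2 * f p.1)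
                = σ * (f p.1 * g p.2 + g p.1 * f p.2) := by ring
            first
              | (rw [e]; exact h2)
              | (rw [← e]; exact h2)
      have hUsym : Upp f g p.1 p.2 = Upp f g p.2 p.1 := by
        show (if 0 < f p.1 * f p.2 - g p.1 * g p.2 then (1:ℝ) else 0)
            = if 0 < f p.2 * f p.1 - g p.2 * g p.1 then 1 else 0
        rw [mul_comm (f p.2) (f p.1), mul_comm (g p.2) (g p.1)]
      show (if cond p.1 p.2 then (1:ℝ) else Upp f g p.1 p.2)
          = if cond p.2 p.1 then 1 else Upp f g p.2 p.1
      by_cases h : cond p.1 p.2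
      · rw [if_pos h, if_pos (hcsym.1 h)]
      · rw [if_neg h, if_neg (fun hc => h (hcsym.2 hc)), hUsym]
  -- Upp vanishes where cond holds
  have hUpp0 : ∀ x y, cond x y → Upp f g x y = 0 := by
    intro x y hc
    show (if 0 < f x * f y - g x * g y then (1:ℝ) else 0) = 0
    rw [if_neg]
    rw [hc.1]
    exact lt_irrefl 0
  have hdecomp : ∀ x y, Vp x y = Upp f g x y + χ x y := by
    intro x y
    by_cases h : cond x y
    · show (if cond x y then (1:ℝ) else _) = _ + if cond x y then (1:ℝ) else 0
      rw [if_pos h, if_pos h, hUpp0 x y h]; ring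
    · show (if cond x y then (1:ℝ) else _) = _ + if cond x y then (1:ℝ) else 0
      rw [if_neg h, if_neg h]; ring
  -- integrabilities
  have iUfg := intQ hU.1 (graphon_abs_le hU) hf.1 hg.1 hfi hgi
  have iUgf := intQ hU.1 (graphon_abs_le hU) hg.1 hf.1 hgi hfi
  have iUff := intQ hU.1 (graphon_abs_le hU) hf.1 hf.1 hfi hfi
  have iUgg := intQ hU.1 (graphon_abs_le hU) hg.1 hg.1 hgi hgi
  have iVfg := intQ hGr.1 (graphon_abs_le hGr) hf.1 hg.1 hfi hgi
  have iVgf := intQ hGr.1 (graphon_abs_le hGr) hg.1 hf.1 hgi hfi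
  have iVff := intQ hGr.1 (graphon_abs_le hGr) hf.1 hf.1 hfi hfi
  have iVgg := intQ hGr.1 (graphon_abs_le hGr) hg.1 hg.1 hgi hgi
  have iχfg := intQ hχm hχb hf.1 hg.1 hfi hgi
  have iχgf := intQ hχm hχb hg.1 hf.1 hgi hfi
  -- A-B equality for Vp
  have hABp : Q Vp f f - Q Vp g g = graphonSpr W := by
    have e : ∀ p : ℝ × ℝ, Vp p.1 p.2 * f p.1 * f p.2 - Vp p.1 p.2 * g p.1 * g p.2
        = Upp f g p.1 p.2 * f p.1 * f p.2 - Upp f g p.1 p.2 * g p.1 * g p.2 := by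
      intro p
      by_cases h : cond p.1 p.2
      · have h1 : Vp p.1 p.2 = 1 := by
          show (if cond p.1 p.2 then (1:ℝ) else _) = 1; rw [if_pos h]
        rw [h1, hUpp0 _ _ h]
        have := h.1
        nlinarith [this]
      · have h1 : Vp p.1 p.2 = Upp f g p.1 p.2 := by
          show (if cond p.1 p.2 then (1:ℝ) else _) = _; rw [if_neg h]
        rw [h1]
    have s1 : (∫ p : ℝ × ℝ, (Vp p.1 p.2 * f p.1 * f p.2 - Vp p.1 p.2 * g p.1 * g p.2)
        ∂(unitInt.prod unitInt)) = Q Vp f f - Q Vp g g := integral_sub iVff iVgg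
    have s2 : (∫ p : ℝ × ℝ, (Upp f g p.1 p.2 * f p.1 * f p.2
        - Upp f g p.1 p.2 * g p.1 * g p.2)
        ∂(unitInt.prod unitInt)) = Q (Upp f g) f f - Q (Upp f g) g g := integral_sub iUff iUgg
    rw [← hQeq, ← s1, ← s2]
    exact integral_congr_ae (Filter.Eventually.of_forall e)
  have hSVp : Q Vp f g + Q Vp g f = 0 := keyC hmax hGr hf hg hρ hABp
  -- decompose Q Vp f g
  have d1 : Q Vp f g = Q (Upp f g) f g
      + ∫ p : ℝ × ℝ, χ p.1 p.2 * f p.1 * g p.2 ∂(unitInt.prod unitInt) := by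
    have e : ∀ p : ℝ × ℝ, Vp p.1 p.2 * f p.1 * g p.2
        = Upp f g p.1 p.2 * f p.1 * g p.2 + χ p.1 p.2 * f p.1 * g p.2 := by
      intro p; rw [hdecomp p.1 p.2]; ring
    rw [Q, integral_congr_ae (Filter.Eventually.of_forall e), integral_add iUfg iχfg]
    rfl
  have d2 : Q Vp g f = Q (Upp f g) g f
      + ∫ p : ℝ × ℝ, χ p.1 p.2 * g p.1 * f p.2 ∂(unitInt.prod unitInt) := by
    have e : ∀ p : ℝ × ℝ, Vp p.1 p.2 * g p.1 * f p.2
        = Upp f g p.1 p.2 * g p.1 * f p.2 + χ p.1 p.2 * g p.1 * f p.2 := by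
      intro p; rw [hdecomp p.1 p.2]; ring
    rw [Q, integral_congr_ae (Filter.Eventually.of_forall e), integral_add iUgf iχgf]
    rfl
  have hK : (∫ p : ℝ × ℝ, (χ p.1 p.2 * f p.1 * g p.2 + χ p.1 p.2 * g p.1 * f p.2)
      ∂(unitInt.prod unitInt)) = 0 := by
    rw [integral_add iχfg iχgf]
    have := hSVp
    rw [d1, d2] at this
    linarith [hSUpp]
  -- multiply by σ and use nonnegativity
  have hKσ : (∫ p : ℝ × ℝ, σ * (χ p.1 p.2 * f p.1 * g p.2 + χ p.1 p.2 * g p.1 * f p.2)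
      ∂(unitInt.prod unitInt)) = 0 := by
    rw [integral_const_mul, hK, mul_zero]
  have hiσ : Integrable (fun p : ℝ × ℝ =>
      σ * (χ p.1 p.2 * f p.1 * g p.2 + χ p.1 p.2 * g p.1 * f p.2))
      (unitInt.prod unitInt) := (iχfg.add iχgf).const_mul σ
  have hnn : 0 ≤ᵐ[unitInt.prod unitInt] (fun p : ℝ × ℝ =>
      σ * (χ p.1 p.2 * f p.1 * g p.2 + χ p.1 p.2 * g p.1 * f p.2)) := by
    refine Filter.Eventually.of_forall (fun p => ?_)
    simp only [Pi.zero_apply]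
    by_cases h : cond p.1 p.2
    · have hχ1 : χ p.1 p.2 = 1 := by
        show (if cond p.1 p.2 then (1:ℝ) else 0) = 1; rw [if_pos h]
      rw [hχ1]
      have := h.2
      nlinarith [this]
    · have hχ0 : χ p.1 p.2 = 0 := by
        show (if cond p.1 p.2 then (1:ℝ) else 0) = 0; rw [if_neg h]
      rw [hχ0]
      have e0 : σ * ((0:ℝ) * f p.1 * g p.2 + 0 * g p.1 * f p.2) = 0 := by ring
      rw [e0]
  have hae := (integral_eq_zero_iff_of_nonneg_ae hnn hiσ).1 hKσ
  filter_upwards [hae] with p hp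
  rintro ⟨h1, h2⟩
  have hc : cond p.1 p.2 := ⟨h1, h2⟩
  have hχ1 : χ p.1 p.2 = 1 := by
    show (if cond p.1 p.2 then (1:ℝ) else 0) = 1; rw [if_pos hc]
  rw [hχ1] at hp
  simp only [Pi.zero_apply] at hp
  nlinarith [h2, hp]

lemma struct_ae {W : ℝ → ℝ → ℝ} {f g : ℝ → ℝ} (hW : IsGraphon W)
    (hmax : ∀ U : ℝ → ℝ → ℝ, IsGraphon U → graphonSpr U ≤ graphonSpr W)
    (hf : IsUnitL2 f) (hg : IsUnitL2 g)
    (hfe : IsEigenfunction W (graphonMu W) f) (hge : IsEigenfunction W (graphonNu W) g) :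
    ∀ᵐ p : ℝ × ℝ ∂(unitInt.prod unitInt),
      (f p.1 * f p.2 - g p.1 * g p.2 = 0 →
        ((f p.1 = 0 ∧ g p.1 = 0) ∨ (f p.2 = 0 ∧ g p.2 = 0))) := by
  have h1 := no_sign_kk hW hmax hf hg hfe hge 1 (Or.inl rfl)
  have h2 := no_sign_kk hW hmax hf hg hfe hge (-1) (Or.inr rfl)
  filter_upwards [h1, h2] with p hp1 hp2
  intro hhh
  have hk : f p.1 * g p.2 + g p.1 * f p.2 = 0 := by
    by_contra hk0
    rcases lt_or_gt_of_ne hk0 with h | h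
    · exact hp2 ⟨hhh, by nlinarith⟩
    · exact hp1 ⟨hhh, by nlinarith⟩
  have key : (f p.1 * f p.2) ^ 2 + (f p.1 * g p.2) ^ 2 = 0 := by
    linear_combination (f p.1 * f p.2) * hhh + (f p.1 * g p.2) * hk
  have hff : f p.1 * f p.2 = 0 := by nlinarith [sq_nonneg (f p.1 * f p.2), sq_nonneg (f p.1 * g p.2)]
  have hfg0 : f p.1 * g p.2 = 0 := by nlinarith [sq_nonneg (f p.1 * f p.2), sq_nonneg (f p.1 * g p.2)]
  have hgg : g p.1 * g p.2 = 0 := by linarith [hhh]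
  have hgf : g p.1 * f p.2 = 0 := by linarith [hk]
  by_cases hf1 : f p.1 = 0
  · by_cases hg1 : g p.1 = 0
    · exact Or.inl ⟨hf1, hg1⟩
    · refine Or.inr ⟨?_, ?_⟩
      · rcases mul_eq_zero.1 hgf with h | h
        · exact absurd h hg1
        · exact h
      · rcases mul_eq_zero.1 hgg with h | h
        · exact absurd h hg1
        · exact h
  · refine Or.inr ⟨?_, ?_⟩
    · rcases mul_eq_zero.1 hff with h | h
      · exact absurd h hf1
      · exact h
    · rcases mul_eq_zero.1 hfg0 with h | h
      · exact absurd h hf1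
      · exact h

lemma exists_S {f : ℝ → ℝ} (hf : IsUnitL2 f) :
    ∃ S : Set ℝ, MeasurableSet S ∧ (∀ x ∈ S, f x ≠ 0)
      ∧ (∫ x, S.indicator f x ∂unitInt) ≠ 0 := by
  have hfi := integrable_of_sq hf.1 (sq_integrable_of_unit hf)
  set Sp : Set ℝ := {x | 0 < f x} with hSp
  set Sm : Set ℝ := {x | f x < 0} with hSm
  have hSpm : MeasurableSet Sp := measurableSet_lt measurable_const hf.1
  have hSmm : MeasurableSet Sm := measurableSet_lt hf.1 measurable_const
  by_cases hp : (∫ x, Sp.indicator f x ∂unitInt) ≠ 0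
  · exact ⟨Sp, hSpm, fun x hx => ne_of_gt hx, hp⟩
  by_cases hm : (∫ x, Sm.indicator f x ∂unitInt) ≠ 0
  · exact ⟨Sm, hSmm, fun x hx => ne_of_lt hx, hm⟩
  exfalso
  push_neg at hp hm
  have hip : Integrable (Sp.indicator f) unitInt := hfi.indicator hSpm
  have him : Integrable (Sm.indicator f) unitInt := hfi.indicator hSmm
  have hnnp : 0 ≤ᵐ[unitInt] Sp.indicator f := by
    refine Filter.Eventually.of_forall (fun x => ?_)
    simp only [Pi.zero_apply]
    by_cases hx : x ∈ Sp
    · rw [Set.indicator_of_mem hx]; exact le_of_lt hx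
    · rw [Set.indicator_of_notMem hx]
  have haep := (integral_eq_zero_iff_of_nonneg_ae hnnp hip).1 hp
  have hnnm : 0 ≤ᵐ[unitInt] (fun x => - Sm.indicator f x) := by
    refine Filter.Eventually.of_forall (fun x => ?_)
    simp only [Pi.zero_apply]
    show (0:ℝ) ≤ - Sm.indicator f x
    by_cases hx : x ∈ Sm
    · rw [Set.indicator_of_mem hx]; linarith [hx.out]
    · rw [Set.indicator_of_notMem hx]; simp
  have hm' : (∫ x, - Sm.indicator f x ∂unitInt) = 0 := by
    rw [integral_neg, hm, neg_zero]
  have haem := (integral_eq_zero_iff_of_nonneg_ae hnnm him.neg).1 hm'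
  have hf0 : (fun x => f x ^ 2) =ᵐ[unitInt] 0 := by
    filter_upwards [haep, haem] with x h1 h2
    simp only [Pi.zero_apply] at h1 h2 ⊢
    have h2' : - Sm.indicator f x = 0 := h2
    rcases lt_trichotomy (f x) 0 with h | h | h
    · exfalso
      have hx : x ∈ Sm := h
      rw [Set.indicator_of_mem hx] at h2'
      linarith
    · rw [h]; ring
    · exfalso
      have hx : x ∈ Sp := h
      rw [Set.indicator_of_mem hx] at h1
      linarith
  have : (∫ x, f x ^ 2 ∂unitInt) = 0 := by
    rw [integral_congr_ae hf0]
    simp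
  rw [← integral_unitInt_eq (fun x => f x ^ 2)] at this
  rw [hf.2] at this
  norm_num at this

set_option maxHeartbeats 2000000 in
lemma Z_null {W : ℝ → ℝ → ℝ} {f g : ℝ → ℝ} (hW : IsGraphon W)
    (hmax : ∀ U : ℝ → ℝ → ℝ, IsGraphon U → graphonSpr U ≤ graphonSpr W)
    (hf : IsUnitL2 f) (hg : IsUnitL2 g)
    (hfe : IsEigenfunction W (graphonMu W) f) (hge : IsEigenfunction W (graphonNu W) g) :
    unitInt {x : ℝ | f x = 0 ∧ g x = 0} = 0 := by
  classical
  by_contra hne0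
  have hfi := integrable_of_sq hf.1 (sq_integrable_of_unit hf)
  have hgi := integrable_of_sq hg.1 (sq_integrable_of_unit hg)
  have hU := isGraphon_Upp hf.1 hg.1
  obtain ⟨_, hQeq, _, _⟩ := chain hW hmax hf hg hfe hge
  -- basic Z setup
  have hZsetm : MeasurableSet {x : ℝ | f x = 0 ∧ g x = 0} := by
    have : {x : ℝ | f x = 0 ∧ g x = 0} = f ⁻¹' {0} ∩ g ⁻¹' {0} := by
      ext x; simp [Set.mem_preimage]
    rw [this]
    exact (hf.1 (measurableSet_singleton 0)).inter (hg.1 (measurableSet_singleton 0))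
  set Z : Set ℝ := {x : ℝ | f x = 0 ∧ g x = 0} ∩ Set.Icc 0 1 with hZdef
  have hZm : MeasurableSet Z := hZsetm.inter measurableSet_Icc
  have hZval : unitInt {x : ℝ | f x = 0 ∧ g x = 0} = volume Z := by
    rw [unitInt, Measure.restrict_apply hZsetm]
  have hZfin : volume Z < ⊤ := by
    refine lt_of_le_of_lt (measure_mono (Set.inter_subset_right)) ?_
    rw [Real.volume_Icc]; exact ENNReal.ofReal_lt_top
  set m : ℝ := (volume Z).toReal with hmdef
  have hmpos : 0 < m := ENNReal.toReal_pos (by rw [← hZval]; exact hne0) (ne_of_lt hZfin)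
  have hfZ : ∀ x ∈ Z, f x = 0 := fun x hx => hx.1.1
  have hgZ : ∀ x ∈ Z, g x = 0 := fun x hx => hx.1.2
  set z : ℝ → ℝ := Z.indicator (fun _ => (Real.sqrt m)⁻¹) with hzdef
  have hzm : Measurable z := measurable_const.indicator hZm
  have hsqm : (0:ℝ) < Real.sqrt m := Real.sqrt_pos.2 hmpos
  have hfz0 : ∀ x, f x * z x = 0 := by
    intro x
    by_cases hx : x ∈ Z
    · rw [hfZ x hx]; ring
    · rw [hzdef]; rw [Set.indicator_of_notMem hx]; ring
  have hgz0 : ∀ x, g x * z x = 0 := by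
    intro x
    by_cases hx : x ∈ Z
    · rw [hgZ x hx]; ring
    · rw [hzdef]; rw [Set.indicator_of_notMem hx]; ring
  have hunitZ : unitInt Z = volume Z := by
    rw [unitInt, Measure.restrict_apply hZm,
      Set.inter_eq_self_of_subset_left (Set.inter_subset_right)]
  -- z as a unit vector
  have hz2eq : ∀ x, z x ^ 2 = Z.indicator (fun _ => m⁻¹) x := by
    intro x
    by_cases hx : x ∈ Z
    · rw [hzdef]
      rw [Set.indicator_of_mem hx, Set.indicator_of_mem hx, ← Real.sqrt_inv,
        Real.sq_sqrt (by positivity)]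
    · rw [hzdef]
      rw [Set.indicator_of_notMem hx, Set.indicator_of_notMem hx]; ring
  have hintz2 : (∫ x, z x ^ 2 ∂unitInt) = 1 := by
    have e : (fun x => z x ^ 2) = Z.indicator (fun _ => m⁻¹) := funext hz2eq
    rw [e, integral_indicator hZm, setIntegral_const, measureReal_def, hunitZ, ← hmdef, smul_eq_mul]
    field_simp
  have hzu : IsUnitL2 z := by
    refine ⟨hzm, ?_⟩
    rw [integral_unitInt_eq (fun x => z x ^ 2)]
    exact hintz2
  have hzi := integrable_of_sq hzm (sq_integrable_of_unit hzu)
  have hintz : (∫ x, z x ∂unitInt) = Real.sqrt m := by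
    rw [hzdef, integral_indicator hZm, setIntegral_const, measureReal_def, hunitZ, ← hmdef, smul_eq_mul]
    rw [show m * (Real.sqrt m)⁻¹ = Real.sqrt m * Real.sqrt m * (Real.sqrt m)⁻¹ from by
      rw [Real.mul_self_sqrt hmpos.le]]
    field_simp
  have hρfz : (∫ x, f x * z x ∂unitInt) = 0 := by
    have : (fun x => f x * z x) = fun _ => (0:ℝ) := funext hfz0
    rw [this, integral_const]
    simp
  -- the set S
  obtain ⟨S, hSm, hSne, hJne⟩ := exists_S hf
  set J : ℝ := ∫ x, S.indicator f x ∂unitInt with hJdef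
  have hSZ : ∀ x, x ∈ S → x ∉ Z := fun x hx hz => hSne x hx (hfZ x hz)
  have hiSf : Integrable (S.indicator f) unitInt := hfi.indicator hSm
  -- the perturbed kernel
  set cond : ℝ → ℝ → Prop := fun x y => (x ∈ Z ∧ y ∈ S) ∨ (x ∈ S ∧ y ∈ Z) with hconddef
  set VZ : ℝ → ℝ → ℝ := fun x y => if cond x y then 1 else Upp f g x y with hVZdef
  set χ : ℝ → ℝ → ℝ := fun x y => if cond x y then 1 else 0 with hχdef
  have hDm : MeasurableSet {p : ℝ × ℝ | cond p.1 p.2} := by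
    have : {p : ℝ × ℝ | cond p.1 p.2} = (Z ×ˢ S) ∪ (S ×ˢ Z) := by
      ext p; simp [hconddef, Set.mem_prod]
    rw [this]
    exact (hZm.prod hSm).union (hSm.prod hZm)
  have hUpp0 : ∀ x y, cond x y → Upp f g x y = 0 := by
    intro x y hc
    have hhh : f x * f y - g x * g y = 0 := by
      rcases hc with ⟨hx, _⟩ | ⟨_, hy⟩
      · rw [hfZ x hx, hgZ x hx]; ring
      · rw [hfZ y hy, hgZ y hy]; ring
    show (if 0 < f x * f y - g x * g y then (1:ℝ) else 0) = 0
    rw [if_neg]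
    rw [hhh]
    exact lt_irrefl 0
  have hGr : IsGraphon VZ := by
    refine ⟨Measurable.ite hDm measurable_const hU.1, ?_, ?_⟩
    · intro x y
      show (if cond x y then (1:ℝ) else Upp f g x y) ∈ Set.Icc (0:ℝ) 1
      by_cases h : cond x y
      · rw [if_pos h]; norm_num
      · rw [if_neg h]; exact hU.2.1 x y
    · refine Filter.Eventually.of_forall (fun p => ?_)
      have hcsym : cond p.1 p.2 ↔ cond p.2 p.1 := by
        rw [hconddef]; tauto
      have hUsym : Upp f g p.1 p.2 = Upp f g p.2 p.1 := by
        show (if 0 < f p.1 * f p.2 - g p.1 * g p.2 then (1:ℝ) else 0)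
            = if 0 < f p.2 * f p.1 - g p.2 * g p.1 then 1 else 0
        rw [mul_comm (f p.2) (f p.1), mul_comm (g p.2) (g p.1)]
      show (if cond p.1 p.2 then (1:ℝ) else Upp f g p.1 p.2)
          = if cond p.2 p.1 then 1 else Upp f g p.2 p.1
      by_cases h : cond p.1 p.2
      · rw [if_pos h, if_pos (hcsym.1 h)]
      · rw [if_neg h, if_neg (fun hc => h (hcsym.2 hc)), hUsym]
  have hdecomp : ∀ x y, VZ x y = Upp f g x y + χ x y := by
    intro x y
    show (if cond x y then (1:ℝ) else Upp f g x y)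
        = Upp f g x y + if cond x y then (1:ℝ) else 0
    by_cases h : cond x y
    · rw [if_pos h, if_pos h, hUpp0 x y h]; ring
    · rw [if_neg h, if_neg h]; ring
  -- pointwise integrand computations
  have pfz : ∀ p : ℝ × ℝ, VZ p.1 p.2 * f p.1 * z p.2
      = S.indicator f p.1 * z p.2 := by
    intro p
    rw [hdecomp p.1 p.2]
    by_cases hy : p.2 ∈ Z
    · have hU0 : Upp f g p.1 p.2 = 0 := by
        show (if 0 < f p.1 * f p.2 - g p.1 * g p.2 then (1:ℝ) else 0) = 0
        rw [if_neg]
        rw [hfZ p.2 hy, hgZ p.2 hy]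
        norm_num
      have hcnd : cond p.1 p.2 ↔ p.1 ∈ S := by
        rw [hconddef]
        constructor
        · rintro (⟨_, hs⟩ | ⟨hs, _⟩)
          · exact absurd hy (hSZ p.2 hs)
          · exact hs
        · intro hs; exact Or.inr ⟨hs, hy⟩
      by_cases hx : p.1 ∈ S
      · have : χ p.1 p.2 = 1 := by
          show (if cond p.1 p.2 then (1:ℝ) else 0) = 1
          rw [if_pos (hcnd.2 hx)]
        rw [this, hU0, Set.indicator_of_mem hx]; ring
      · have : χ p.1 p.2 = 0 := by
          show (if cond p.1 p.2 then (1:ℝ) else 0) = 0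
          rw [if_neg (fun hc => hx (hcnd.1 hc))]
        rw [this, hU0, Set.indicator_of_notMem hx]; ring
    · have hz0 : z p.2 = 0 := by rw [hzdef]; exact Set.indicator_of_notMem hy _
      rw [hz0]; ring
  have pzf : ∀ p : ℝ × ℝ, VZ p.1 p.2 * z p.1 * f p.2
      = z p.1 * S.indicator f p.2 := by
    intro p
    rw [hdecomp p.1 p.2]
    by_cases hy : p.1 ∈ Z
    · have hU0 : Upp f g p.1 p.2 = 0 := by
        show (if 0 < f p.1 * f p.2 - g p.1 * g p.2 then (1:ℝ) else 0) = 0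
        rw [if_neg]
        rw [hfZ p.1 hy, hgZ p.1 hy]
        norm_num
      have hcnd : cond p.1 p.2 ↔ p.2 ∈ S := by
        rw [hconddef]
        constructor
        · rintro (⟨_, hs⟩ | ⟨hs, _⟩)
          · exact hs
          · exact absurd hy (hSZ p.1 hs)
        · intro hs; exact Or.inl ⟨hy, hs⟩
      by_cases hx : p.2 ∈ S
      · have : χ p.1 p.2 = 1 := by
          show (if cond p.1 p.2 then (1:ℝ) else 0) = 1
          rw [if_pos (hcnd.2 hx)]
        rw [this, hU0, Set.indicator_of_mem hx]; ring
      · have : χ p.1 p.2 = 0 := by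
          show (if cond p.1 p.2 then (1:ℝ) else 0) = 0
          rw [if_neg (fun hc => hx (hcnd.1 hc))]
        rw [this, hU0, Set.indicator_of_notMem hx]; ring
    · have hz0 : z p.1 = 0 := by rw [hzdef]; exact Set.indicator_of_notMem hy _
      rw [hz0]; ring
  have pzz : ∀ p : ℝ × ℝ, VZ p.1 p.2 * z p.1 * z p.2 = 0 := by
    intro p
    by_cases hx : p.1 ∈ Z
    · by_cases hy : p.2 ∈ Z
      · have hU0 : VZ p.1 p.2 = 0 := by
          show (if cond p.1 p.2 then (1:ℝ) else Upp f g p.1 p.2) = 0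
          have hnc : ¬ cond p.1 p.2 := by
            rw [hconddef]
            rintro (⟨_, hs⟩ | ⟨hs, _⟩)
            · exact (hSZ p.2 hs) hy
            · exact (hSZ p.1 hs) hx
          rw [if_neg hnc]
          show (if 0 < f p.1 * f p.2 - g p.1 * g p.2 then (1:ℝ) else 0) = 0
          rw [if_neg]
          rw [hfZ p.1 hx, hgZ p.1 hx]
          norm_num
        rw [hU0]; ring
      · have hz0 : z p.2 = 0 := by rw [hzdef]; exact Set.indicator_of_notMem hy _
        rw [hz0]; ring
    · have hz0 : z p.1 = 0 := by rw [hzdef]; exact Set.indicator_of_notMem hx _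
      rw [hz0]; ring
  have pff : ∀ p : ℝ × ℝ, VZ p.1 p.2 * f p.1 * f p.2
      = Upp f g p.1 p.2 * f p.1 * f p.2 := by
    intro p
    rw [hdecomp p.1 p.2]
    by_cases h : cond p.1 p.2
    · have he : χ p.1 p.2 = 1 := by
        show (if cond p.1 p.2 then (1:ℝ) else 0) = 1; rw [if_pos h]
      have hf0 : f p.1 * f p.2 = 0 := by
        rcases h with ⟨hx, _⟩ | ⟨_, hy⟩
        · rw [hfZ p.1 hx]; ring
        · rw [hfZ p.2 hy]; ring
      rw [he]
      nlinarith [hf0]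
    · have he : χ p.1 p.2 = 0 := by
        show (if cond p.1 p.2 then (1:ℝ) else 0) = 0; rw [if_neg h]
      rw [he]; ring
  have pgg : ∀ p : ℝ × ℝ, VZ p.1 p.2 * g p.1 * g p.2
      = Upp f g p.1 p.2 * g p.1 * g p.2 := by
    intro p
    rw [hdecomp p.1 p.2]
    by_cases h : cond p.1 p.2
    · have he : χ p.1 p.2 = 1 := by
        show (if cond p.1 p.2 then (1:ℝ) else 0) = 1; rw [if_pos h]
      have hf0 : g p.1 * g p.2 = 0 := by
        rcases h with ⟨hx, _⟩ | ⟨_, hy⟩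
        · rw [hgZ p.1 hx]; ring
        · rw [hgZ p.2 hy]; ring
      rw [he]
      nlinarith [hf0]
    · have he : χ p.1 p.2 = 0 := by
        show (if cond p.1 p.2 then (1:ℝ) else 0) = 0; rw [if_neg h]
      rw [he]; ring
  -- the Q-values
  have cff : Q VZ f f = Q (Upp f g) f f :=
    integral_congr_ae (Filter.Eventually.of_forall pff)
  have cgg : Q VZ g g = Q (Upp f g) g g :=
    integral_congr_ae (Filter.Eventually.of_forall pgg)
  have cfz : Q VZ f z = J * Real.sqrt m := by
    rw [Q, integral_congr_ae (Filter.Eventually.of_forall pfz)]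
    rw [integral_prod_mul (f := S.indicator f) (g := z), hintz, ← hJdef]
  have czf : Q VZ z f = Real.sqrt m * J := by
    rw [Q, integral_congr_ae (Filter.Eventually.of_forall pzf)]
    rw [integral_prod_mul (f := z) (g := S.indicator f), hintz, ← hJdef]
  have czz : Q VZ z z = 0 := by
    rw [Q, integral_congr_ae (Filter.Eventually.of_forall
      (fun p => pzz p)), integral_const]
    simp
  -- master inequality
  have master : ∀ t : ℝ, 2 * t * (J * Real.sqrt m) ≤ t ^ 2 * Q (Upp f g) f f := by
    intro t
    set a : ℝ := (Real.sqrt (1 + t ^ 2))⁻¹ with hadef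
    have ha2 : a ^ 2 = (1 + t ^ 2)⁻¹ := sqrt_inv_sq
    have hpos : (0:ℝ) < 1 + t ^ 2 := by positivity
    have hu : IsUnitL2 (fun x => a * f x + (a * t) * z x) := by
      refine unit_combo hf hzu hρfz ?_
      rw [show a ^ 2 + (a * t) ^ 2 = a ^ 2 * (1 + t ^ 2) from by ring, ha2]
      field_simp
    have hui : Integrable (fun x => a * f x + (a * t) * z x) unitInt :=
      (hfi.const_mul _).add (hzi.const_mul _)
    have hq : quadForm VZ (fun x => a * f x + (a * t) * z x)
        = a ^ 2 * Q VZ f f + (a * (a * t)) * (Q VZ f z + Q VZ z f)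
          + (a * t) ^ 2 * Q VZ z z := by
      rw [quadForm_eq_Q (intQ hGr.1 (graphon_abs_le hGr) hu.1 hu.1 hui hui),
        Q_expand hGr.1 (graphon_abs_le hGr) hf.1 hzm hfi hzi]
    have hqg : quadForm VZ g = Q VZ g g :=
      quadForm_eq_Q (intQ hGr.1 (graphon_abs_le hGr) hg.1 hg.1 hgi hgi)
    have hle := spr_ge_pair hmax hGr hu hg
    rw [hq, hqg, cff, cgg, cfz, czf, czz] at hle
    rw [← hQeq] at hle
    have ha2' : a ^ 2 * (1 + t ^ 2) = 1 := by rw [ha2]; field_simp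
    have h6 : a ^ 2 * Q (Upp f g) f f + 2 * (a ^ 2 * t) * (J * Real.sqrt m)
        ≤ Q (Upp f g) f f := by nlinarith [hle]
    have h7 := mul_le_mul_of_nonneg_left h6 hpos.le
    have h8 : (a ^ 2 * (1 + t ^ 2)) * Q (Upp f g) f f
        + 2 * ((a ^ 2 * (1 + t ^ 2)) * t) * (J * Real.sqrt m)
        ≤ (1 + t ^ 2) * Q (Upp f g) f f := by nlinarith [h7]
    rw [ha2'] at h8
    nlinarith [h8]
  -- contradiction
  have hσ : ∃ σ : ℝ, σ ^ 2 = 1 ∧ 0 < σ * J := by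
    rcases lt_or_gt_of_ne hJne with h | h
    · exact ⟨-1, by norm_num, by nlinarith⟩
    · exact ⟨1, by norm_num, by nlinarith⟩
  obtain ⟨σ, hσ2, hσJ⟩ := hσ
  set P : ℝ := σ * J * Real.sqrt m with hPdef
  have hP : 0 < P := mul_pos hσJ hsqm
  set A : ℝ := Q (Upp f g) f f with hAdef
  have master2 : ∀ s : ℝ, 2 * s * P ≤ s ^ 2 * A := by
    intro s
    have := master (σ * s)
    have e1 : (σ * s) ^ 2 = s ^ 2 := by rw [mul_pow, hσ2, one_mul]
    have e2 : 2 * (σ * s) * (J * Real.sqrt m) = 2 * s * P := by rw [hPdef]; ring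
    rw [e1, e2] at this
    exact this
  have hA : 0 < A := by
    have := master2 1
    nlinarith [hP]
  have h2 := master2 (P / A)
  have e3 : (P / A) ^ 2 * A = (P / A) * P := by field_simp
  rw [e3] at h2
  have hqP : 0 < (P / A) * P := mul_pos (div_pos hP hA) hP
  linarith

theorem graphon_extremal_indicator (W : ℝ → ℝ → ℝ) (hW : IsGraphon W)
    (hmax : ∀ U : ℝ → ℝ → ℝ, IsGraphon U → graphonSpr U ≤ graphonSpr W)
    (f g : ℝ → ℝ) (hf : IsUnitL2 f) (hg : IsUnitL2 g)
    (hfe : IsEigenfunction W (graphonMu W) f)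
    (hge : IsEigenfunction W (graphonNu W) g) :
    (∀ᵐ p : ℝ × ℝ ∂unitSq,
      (g p.1 * g p.2 < f p.1 * f p.2 → W p.1 p.2 = 1) ∧
      (f p.1 * f p.2 < g p.1 * g p.2 → W p.1 p.2 = 0)) ∧
    (∀ᵐ p : ℝ × ℝ ∂unitSq, f p.1 * f p.2 - g p.1 * g p.2 ≠ 0) := by
  have hae := (chain hW hmax hf hg hfe hge).1
  constructor
  · rw [unitSq_eq]
    filter_upwards [hae] with p hp
    constructor
    · intro hlt
      have hU1 : Upp f g p.1 p.2 = 1 := by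
        show (if 0 < f p.1 * f p.2 - g p.1 * g p.2 then (1:ℝ) else 0) = 1
        rw [if_pos (by linarith)]
      rw [hU1] at hp
      rcases mul_eq_zero.1 hp with h | h
      · linarith [h]
      · linarith [h]
    · intro hlt
      have hU0 : Upp f g p.1 p.2 = 0 := by
        show (if 0 < f p.1 * f p.2 - g p.1 * g p.2 then (1:ℝ) else 0) = 0
        rw [if_neg (by intro hc; linarith)]
      rw [hU0] at hp
      rcases mul_eq_zero.1 hp with h | h
      · linarith [h]
      · linarith [h]
  · rw [unitSq_eq]
    have hstruct := struct_ae hW hmax hf hg hfe hge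
    have hZ := Z_null hW hmax hf hg hfe hge
    have hnull1 : (unitInt.prod unitInt) {p : ℝ × ℝ | f p.1 = 0 ∧ g p.1 = 0} = 0 := by
      have e : {p : ℝ × ℝ | f p.1 = 0 ∧ g p.1 = 0}
          = {x : ℝ | f x = 0 ∧ g x = 0} ×ˢ (Set.univ : Set ℝ) := by
        ext p; simp [Set.mem_prod]
      rw [e, Measure.prod_prod, hZ, zero_mul]
    have hnull2 : (unitInt.prod unitInt) {p : ℝ × ℝ | f p.2 = 0 ∧ g p.2 = 0} = 0 := by
      have e : {p : ℝ × ℝ | f p.2 = 0 ∧ g p.2 = 0}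
          = (Set.univ : Set ℝ) ×ˢ {x : ℝ | f x = 0 ∧ g x = 0} := by
        ext p; simp [Set.mem_prod]
      rw [e, Measure.prod_prod, hZ, mul_zero]
    have hae1 : ∀ᵐ p : ℝ × ℝ ∂(unitInt.prod unitInt), ¬(f p.1 = 0 ∧ g p.1 = 0) := by
      rw [MeasureTheory.ae_iff]
      simp only [not_not]
      exact hnull1
    have hae2 : ∀ᵐ p : ℝ × ℝ ∂(unitInt.prod unitInt), ¬(f p.2 = 0 ∧ g p.2 = 0) := by
      rw [MeasureTheory.ae_iff]
      simp only [not_not]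
      exact hnull2
    filter_upwards [hstruct, hae1, hae2] with p hs h1 h2
    intro heq
    rcases hs heq with hL | hR
    · exact h1 hL
    · exact h2 hR
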